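/- Let G be a finite simple graph with a distinguished root vertex v, and fix N ≥ 1. Define the pointed chromatic polynomial P_{G,v} = Σ_{S ⊆ E(G)} (−1)^{|S|} · p_{λ_v^-(G_S)}(x_1,…,x_N) · z^{λ_v^+(G_S)−1}, an element of ℚ[x_1,…,x_N][z]. Then for every k ≥ 0, the coefficient of (−z)^k in P_{G,v} (that is, (−1)^k times the coefficient of z^k) equals Σ_H f(H)·X_{G∖H}(x_1,…,x_N), where the sum is over all induced subgraphs H of G such that H is connected, H has k+1 vertices, and v ∈ V(H); here f(H) = Σ_{S ⊆ E(H) such that (V(H),S) is connected} (−1)^{|S|−k}, and G∖H is the induced subgraph of G on V(G)∖V(H). -/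

import Mathlib

open MvPolynomial

attribute [local instance 10] Classical.propDecidable

/-- The finset of proper colorings of `G` with color set `Fin C`. -/
noncomputable def properColorings {V : Type} [Fintype V] (G : SimpleGraph V) (C : ℕ) :
    Finset (V → Fin C) :=
  Finset.univ.filter fun κ => ∀ u w, G.Adj u w → κ u ≠ κ w

/-- Chromatic symmetric polynomial of `G` with `C` colors, one variable per color
(`X_∅ = 1` for the empty graph). -/
noncomputable def XG {V : Type} [Fintype V] (G : SimpleGraph V) (C : ℕ) :
    MvPolynomial (Fin C) ℚ :=
  ∑ κ ∈ properColorings G C, ∏ v : V, X (κ v)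

/-- The number of vertices in the connected component `c` of `H`. -/
noncomputable def compCard {V : Type} [Fintype V] (H : SimpleGraph V)
    (c : H.ConnectedComponent) : ℕ :=
  (Finset.univ.filter (fun v => H.connectedComponentMk v = c)).card

/-- `p_{λ_v^-(G_S)}(x_1,…,x_N)`: the product of the power sums `p_{|C|}` over the
connected components `C` of `G_S = (V(G), S)` other than the component of `v`. -/
noncomputable def pLamMinus {V : Type} [Fintype V] (G : SimpleGraph V) (v : V)
    (S : Finset (Sym2 V)) (N : ℕ) : MvPolynomial (Fin N) ℚ :=
  ∏ c ∈ (Finset.univ :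
      Finset (SimpleGraph.fromEdgeSet (↑S : Set (Sym2 V))).ConnectedComponent).erase
      ((SimpleGraph.fromEdgeSet (↑S : Set (Sym2 V))).connectedComponentMk v),
    ∑ i : Fin N, X i ^ compCard (SimpleGraph.fromEdgeSet (↑S : Set (Sym2 V))) c

/-- Pawlowski's pointed chromatic polynomial
`P_{G,v} = Σ_{S ⊆ E(G)} (−1)^{|S|} p_{λ_v^-(G_S)}(x_1,…,x_N) z^{λ_v^+(G_S)−1}`,
as a polynomial in `z` with coefficients in `ℚ[x_1,…,x_N]`. -/
noncomputable def pointedP {V : Type} [Fintype V] (G : SimpleGraph V) (v : V) (N : ℕ) :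
    Polynomial (MvPolynomial (Fin N) ℚ) :=
  ∑ S ∈ G.edgeFinset.powerset,
    (-1 : Polynomial (MvPolynomial (Fin N) ℚ)) ^ S.card *
      (Polynomial.C (pLamMinus G v S N) *
        Polynomial.X ^
          (compCard (SimpleGraph.fromEdgeSet (↑S : Set (Sym2 V)))
            ((SimpleGraph.fromEdgeSet (↑S : Set (Sym2 V))).connectedComponentMk v) - 1))

/-- `f(H) = Σ (−1)^{|S|−k}` over subsets `S` of the edges of `H` (an induced subgraph on
the vertex set `W`, with `k+1 = |W|`) such that `(V(H), S)` is connected. -/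
noncomputable def fH {V : Type} [Fintype V] (G : SimpleGraph V) (W : Finset V) (k : ℕ) : ℤ :=
  ∑ S ∈ (G.induce (↑W : Set V)).edgeFinset.powerset.filter
      (fun S : Finset (Sym2 (↑W : Set V)) =>
        (SimpleGraph.fromEdgeSet (↑S : Set (Sym2 (↑W : Set V)))).Connected),
    (-1 : ℤ) ^ (S.card + k)

set_option linter.unusedSectionVars false


section AuxWalk

variable {V : Type} [Fintype V]

open SimpleGraph Finset

private abbrev GSgraph (S : Finset (Sym2 V)) : SimpleGraph V :=
  SimpleGraph.fromEdgeSet (↑S : Set (Sym2 V))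

/-- every edge of `S` lies within the component partition class of `v`, or avoids it -/
private lemma walk_side {S : Finset (Sym2 V)} {P : V → Prop}
    (hS : ∀ e ∈ S, (∀ x ∈ e, P x) ∨ (∀ x ∈ e, ¬ P x)) {u w : V}
    (p : (GSgraph S).Walk u w) (hu : P u) :
    P w ∧ (GSgraph (S.filter fun e => ∀ x ∈ e, P x)).Reachable u w := by
  induction p with
  | nil => exact ⟨hu, SimpleGraph.Reachable.refl _⟩
  | @cons a b c h p ih =>
    rw [SimpleGraph.fromEdgeSet_adj] at h
    obtain ⟨he, hne⟩ := h
    have hmem : ∀ x ∈ s(a, b), P x := by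
      rcases hS _ he with h1 | h1
      · exact h1
      · exact absurd hu (h1 a (by simp))
    have hPb : P b := hmem b (by simp)
    obtain ⟨hw, hr⟩ := ih hPb
    refine ⟨hw, SimpleGraph.Reachable.trans ?_ hr⟩
    refine SimpleGraph.Adj.reachable ((SimpleGraph.fromEdgeSet_adj _).mpr ⟨?_, hne⟩)
    simp only [Finset.coe_filter, Set.mem_setOf_eq]
    exact ⟨he, hmem⟩

private lemma reach_side {S : Finset (Sym2 V)} {P : V → Prop}
    (hS : ∀ e ∈ S, (∀ x ∈ e, P x) ∨ (∀ x ∈ e, ¬ P x)) {u w : V}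
    (h : (GSgraph S).Reachable u w) (hu : P u) :
    P w ∧ (GSgraph (S.filter fun e => ∀ x ∈ e, P x)).Reachable u w := by
  obtain ⟨p⟩ := h
  exact walk_side hS p hu

private lemma reach_mono {S T : Finset (Sym2 V)} (hST : S ⊆ T) {u w : V}
    (h : (GSgraph S).Reachable u w) : (GSgraph T).Reachable u w :=
  SimpleGraph.Reachable.mono (SimpleGraph.fromEdgeSet_mono (by exact_mod_cast hST)) h

private lemma reach_eq_of_isolated {S : Finset (Sym2 V)} {P : V → Prop}
    (hS : ∀ e ∈ S, ∀ x ∈ e, P x) {u w : V}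
    (h : (GSgraph S).Reachable u w) (hu : ¬ P u) : w = u := by
  obtain ⟨p⟩ := h
  cases p with
  | nil => rfl
  | @cons a b c h p =>
    rw [SimpleGraph.fromEdgeSet_adj] at h
    exact absurd (hS _ h.1 u (by simp)) hu


private lemma sides_of_comp (S : Finset (Sym2 V)) (v : V)
    (W : Finset V)
    (hW : W = Finset.univ.filter fun u =>
      (GSgraph S).connectedComponentMk u = (GSgraph S).connectedComponentMk v) :
    ∀ e ∈ S, (∀ x ∈ e, x ∈ W) ∨ (∀ x ∈ e, x ∉ W) := by
  intro e he
  induction e with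
  | _ a b =>
    have hab : (GSgraph S).connectedComponentMk a = (GSgraph S).connectedComponentMk b := by
      by_cases h : a = b
      · rw [h]
      · exact SimpleGraph.ConnectedComponent.connectedComponentMk_eq_of_adj
          ((SimpleGraph.fromEdgeSet_adj _).mpr ⟨he, h⟩)
    subst hW
    by_cases ha : (GSgraph S).connectedComponentMk a = (GSgraph S).connectedComponentMk v
    · left
      intro x hx
      rcases Sym2.mem_iff.mp hx with rfl | rfl
      · exact Finset.mem_filter.mpr ⟨Finset.mem_univ _, ha⟩
      · exact Finset.mem_filter.mpr ⟨Finset.mem_univ _, hab.symm.trans ha⟩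
    · right
      intro x hx
      rcases Sym2.mem_iff.mp hx with rfl | rfl
      · exact fun hxf => ha (Finset.mem_filter.mp hxf).2
      · exact fun hxf => ha (hab.trans (Finset.mem_filter.mp hxf).2)

private lemma const_of_reach {N : ℕ} {S : Finset (Sym2 V)} {κ : V → Fin N}
    (h : ∀ a b : V, s(a, b) ∈ S → κ a = κ b) {u w : V}
    (r : (GSgraph S).Reachable u w) : κ u = κ w := by
  obtain ⟨p⟩ := r
  induction p with
  | nil => rfl
  | @cons a b c hadj p ih =>
    rw [SimpleGraph.fromEdgeSet_adj] at hadj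
    exact (h a b (by exact_mod_cast hadj.1)).trans ih

private lemma reach_filter_iff {S : Finset (Sym2 V)} {P : V → Prop}
    (hS : ∀ e ∈ S, (∀ x ∈ e, P x) ∨ (∀ x ∈ e, ¬ P x)) {u w : V} (hu : P u) :
    (GSgraph S).Reachable u w ↔ (GSgraph (S.filter fun e => ∀ x ∈ e, P x)).Reachable u w := by
  constructor
  · intro h
    obtain ⟨p⟩ := h
    exact (walk_side hS p hu).2
  · intro h
    exact reach_mono (Finset.filter_subset _ _) h

/-- transport reachability from a subtype edge-set to its image -/
private lemma reach_image_of_reach {A : Set V} {S' : Finset (Sym2 ↥A)} {a b : ↥A}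
    (h : (SimpleGraph.fromEdgeSet (↑S' : Set (Sym2 ↥A))).Reachable a b) :
    (GSgraph (S'.image (Sym2.map (Subtype.val)))).Reachable ↑a ↑b := by
  refine SimpleGraph.Reachable.map ⟨(Subtype.val : ↥A → V), ?_⟩ h
  intro x y hxy
  rw [SimpleGraph.fromEdgeSet_adj] at hxy
  rw [SimpleGraph.fromEdgeSet_adj]
  refine ⟨?_, fun hc => hxy.2 (Subtype.ext hc)⟩
  simp only [Finset.coe_image, Set.mem_image]
  exact ⟨s(x, y), by exact_mod_cast hxy.1, by simp [Sym2.map_pair_eq]⟩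

private lemma reach_of_reach_image {A : Set V} (S' : Finset (Sym2 ↥A)) :
    ∀ {x y : V} (_ : (GSgraph (S'.image (Sym2.map (Subtype.val)))).Walk x y)
      (hx : x ∈ A) (hy : y ∈ A),
      (SimpleGraph.fromEdgeSet (↑S' : Set (Sym2 ↥A))).Reachable ⟨x, hx⟩ ⟨y, hy⟩ := by
  intro x y p
  induction p with
  | nil => intro hx hy; exact SimpleGraph.Reachable.refl _
  | @cons a c d hadj p ih =>
    intro hx hy
    rw [SimpleGraph.fromEdgeSet_adj] at hadj
    obtain ⟨hmem, hne⟩ := hadj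
    simp only [Finset.coe_image, Set.mem_image, Finset.mem_coe] at hmem
    obtain ⟨e', he', hmap⟩ := hmem
    revert hmap
    induction e' with
    | _ a' b' =>
      intro hmap
      rw [Sym2.map_pair_eq, Sym2.eq_iff] at hmap
      rcases hmap with ⟨h1, h2⟩ | ⟨h1, h2⟩
      · have hc : c ∈ A := h2 ▸ b'.2
        refine SimpleGraph.Reachable.trans (SimpleGraph.Adj.reachable
          ((SimpleGraph.fromEdgeSet_adj _).mpr ⟨?_, fun hcc => hne (congrArg Subtype.val hcc)⟩))
          (ih hc hy)
        have : s(a', b') = s((⟨a, hx⟩ : ↥A), (⟨c, hc⟩ : ↥A)) := by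
          rw [Sym2.eq_iff]; left
          exact ⟨Subtype.ext h1, Subtype.ext h2⟩
        rw [← this]; exact_mod_cast he'
      · have hc : c ∈ A := h1 ▸ a'.2
        refine SimpleGraph.Reachable.trans (SimpleGraph.Adj.reachable
          ((SimpleGraph.fromEdgeSet_adj _).mpr ⟨?_, fun hcc => hne (congrArg Subtype.val hcc)⟩))
          (ih hc hy)
        have : s(a', b') = s((⟨a, hx⟩ : ↥A), (⟨c, hc⟩ : ↥A)) := by
          rw [Sym2.eq_iff]; right
          exact ⟨Subtype.ext h1, Subtype.ext h2⟩
        rw [← this]; exact_mod_cast he'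

private lemma image_preimage_eq_self {A : Set V} (S₁ : Finset (Sym2 V))
    (hS₁ : ∀ e ∈ S₁, ∀ x ∈ e, x ∈ A) :
    (S₁.preimage (Sym2.map (Subtype.val : ↥A → V))
        (Set.injOn_of_injective (Sym2.map.injective Subtype.val_injective))).image
      (Sym2.map (Subtype.val : ↥A → V)) = S₁ := by
  ext e
  simp only [Finset.mem_image, Finset.mem_preimage]
  constructor
  · rintro ⟨e', he', rfl⟩; exact he'
  · intro he
    revert he
    induction e with
    | _ a b =>
      intro he
      refine ⟨s((⟨a, hS₁ _ he a (by simp)⟩ : ↥A), (⟨b, hS₁ _ he b (by simp)⟩ : ↥A)), ?_, ?_⟩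
      · rw [Sym2.map_pair_eq]; exact he
      · rw [Sym2.map_pair_eq]

private lemma prod_powersum (F : SimpleGraph V) (W : Finset V) {N : ℕ} (hN : 1 ≤ N)
    (hW : ∀ u w : V, F.Reachable u w → u ∈ W → w ∈ W) :
    (∏ c ∈ (Finset.univ.filter fun c : F.ConnectedComponent =>
        ∀ u, F.connectedComponentMk u = c → u ∉ W),
      ∑ i : Fin N, (X i : MvPolynomial (Fin N) ℚ) ^ compCard F c)
    = ∑ κ ∈ (Finset.univ.filter fun κ : V → Fin N =>
          (∀ u w, F.connectedComponentMk u = F.connectedComponentMk w → κ u = κ w) ∧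
            ∀ u ∈ W, κ u = ⟨0, hN⟩),
        ∏ u ∈ Finset.univ.filter (fun u => u ∉ W), (X (κ u) : MvPolynomial (Fin N) ℚ) := by
  classical
  set d : Fin N := ⟨0, hN⟩ with hd
  set T := (Finset.univ.filter fun c : F.ConnectedComponent =>
      ∀ u, F.connectedComponentMk u = c → u ∉ W) with hT
  have hout : ∀ c : F.ConnectedComponent, F.connectedComponentMk (Quot.out c) = c :=
    fun c => Quot.out_eq c
  have hTiff : ∀ u : V, u ∉ W ↔ F.connectedComponentMk u ∈ T := by
    intro u
    constructor
    · intro hu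
      refine Finset.mem_filter.mpr ⟨Finset.mem_univ _, fun w hw hwW => ?_⟩
      exact hu (hW w u (SimpleGraph.ConnectedComponent.exact hw) hwW)
    · intro hT'
      exact (Finset.mem_filter.mp hT').2 u rfl
  set F' : (↥T → Fin N) → F.ConnectedComponent → Fin N :=
    fun g c => if h : c ∈ T then g ⟨c, h⟩ else d with hF'def
  have hF' : ∀ (g : ↥T → Fin N) (c : ↥T), F' g ↑c = g c := by
    intro g c
    simp only [hF'def, dif_pos c.2]
  rw [← Finset.prod_coe_sort T]
  rw [Fintype.prod_sum (f := fun (c : ↥T) (i : Fin N) => X i ^ compCard F (↑c : F.ConnectedComponent))]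
  refine Finset.sum_nbij' (i := fun g => fun u => F' g (F.connectedComponentMk u))
    (j := fun κ => fun c => κ (Quot.out (↑c : F.ConnectedComponent))) ?_ ?_ ?_ ?_ ?_
  · -- maps into filter
    intro g _
    refine Finset.mem_filter.mpr ⟨Finset.mem_univ _, ?_, ?_⟩
    · intro u w hcomp
      show F' g (F.connectedComponentMk u) = F' g (F.connectedComponentMk w)
      rw [hcomp]
    · intro u huW
      have h' : F.connectedComponentMk u ∉ T := fun hh => ((hTiff u).mpr hh) huW
      simp only [hF'def, dif_neg h']
  · intro κ _
    exact Finset.mem_univ _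
  · -- left inverse
    intro g _
    funext c
    have h1 : F.connectedComponentMk (Quot.out (↑c : F.ConnectedComponent)) ∈ T := by
      rw [hout]; exact c.2
    show F' g (F.connectedComponentMk (Quot.out (↑c : F.ConnectedComponent))) = g c
    simp only [hF'def, dif_pos h1]
    congr 1
    exact Subtype.ext (hout ↑c)
  · -- right inverse
    intro κ hκ
    obtain ⟨-, hconst, hdW⟩ := Finset.mem_filter.mp hκ
    funext u
    by_cases h : F.connectedComponentMk u ∈ T
    · show F' (fun c => κ (Quot.out (↑c : F.ConnectedComponent))) (F.connectedComponentMk u) = κ u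
      simp only [hF'def, dif_pos h]
      exact hconst _ _ (hout _)
    · have huW : u ∈ W := by
        by_contra huW
        exact h ((hTiff u).mp huW)
      show F' (fun c => κ (Quot.out (↑c : F.ConnectedComponent))) (F.connectedComponentMk u) = κ u
      simp only [hF'def, dif_neg h]
      exact (hdW u huW).symm
  · -- weights
    intro g _
    have hmaps : ∀ u ∈ Finset.univ.filter (fun u : V => u ∉ W),
        F.connectedComponentMk u ∈ T :=
      fun u hu => (hTiff u).mp (Finset.mem_filter.mp hu).2
    rw [← Finset.prod_fiberwise_of_maps_to hmaps (fun u => X (F' g (F.connectedComponentMk u)))]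
    have hstep1 : (∏ c : ↥T, (X (g c) : MvPolynomial (Fin N) ℚ) ^ compCard F (↑c : F.ConnectedComponent))
        = ∏ j ∈ T, (X (F' g j) : MvPolynomial (Fin N) ℚ) ^ compCard F j := by
      rw [← Finset.prod_coe_sort T (fun j => X (F' g j) ^ compCard F j)]
      exact Finset.prod_congr rfl fun c _ => by rw [hF' g c]
    rw [hstep1]
    refine Finset.prod_congr rfl fun j hj => ?_
    have hset : (Finset.univ.filter (fun u : V => u ∉ W)).filter
          (fun u => F.connectedComponentMk u = j)
        = Finset.univ.filter (fun u => F.connectedComponentMk u = j) := by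
      ext u
      simp only [Finset.mem_filter, Finset.mem_univ, true_and]
      exact ⟨fun h => h.2, fun h => ⟨(Finset.mem_filter.mp hj).2 u h, h⟩⟩
    calc (X (F' g j) : MvPolynomial (Fin N) ℚ) ^ compCard F j
        = ∏ _u ∈ Finset.univ.filter (fun u => F.connectedComponentMk u = j), (X (F' g j) : MvPolynomial (Fin N) ℚ) := by
          rw [Finset.prod_const]; rfl
      _ = ∏ u ∈ (Finset.univ.filter (fun u : V => u ∉ W)).filter
            (fun u => F.connectedComponentMk u = j), X (F' g (F.connectedComponentMk u)) := by
          rw [hset]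
          exact Finset.prod_congr rfl fun u hu => by
            rw [(Finset.mem_filter.mp hu).2]

private lemma mem_univ'' {α : Type} {F1 : Fintype α} (a : α) : a ∈ (@Finset.univ α F1) :=
  @Finset.mem_univ α F1 a

private lemma stanley (G : SimpleGraph V) (W : Finset V) {N : ℕ} (hN : 1 ≤ N) :
    ∑ S ∈ (G.edgeFinset.filter (fun e => ∀ x ∈ e, x ∉ W)).powerset,
        (-1 : MvPolynomial (Fin N) ℚ) ^ S.card *
          ∏ c ∈ (Finset.univ.filter fun c : (GSgraph S).ConnectedComponent =>
              ∀ u, (GSgraph S).connectedComponentMk u = c → u ∉ W),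
            ∑ i : Fin N, (X i : MvPolynomial (Fin N) ℚ) ^ compCard (GSgraph S) c
      = XG (G.induce {x : V | x ∉ W}) N := by
  classical
  set d : Fin N := ⟨0, hN⟩ with hd
  set E' := G.edgeFinset.filter (fun e => ∀ x ∈ e, x ∉ W) with hE'
  set M : (V → Fin N) → Finset (Sym2 V) :=
    fun κ => E'.filter (fun e => ∀ a b : V, e = s(a, b) → κ a = κ b) with hM
  set wt : (V → Fin N) → MvPolynomial (Fin N) ℚ :=
    fun κ => ∏ u ∈ Finset.univ.filter (fun u => u ∉ W), (X (κ u) : MvPolynomial (Fin N) ℚ)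
    with hwt
  have step1 : ∀ S ∈ E'.powerset,
      (-1 : MvPolynomial (Fin N) ℚ) ^ S.card *
          ∏ c ∈ (Finset.univ.filter fun c : (GSgraph S).ConnectedComponent =>
              ∀ u, (GSgraph S).connectedComponentMk u = c → u ∉ W),
            ∑ i : Fin N, (X i : MvPolynomial (Fin N) ℚ) ^ compCard (GSgraph S) c
        = ∑ κ ∈ (Finset.univ : Finset (V → Fin N)),
            if ((∀ u w, (GSgraph S).connectedComponentMk u =
                  (GSgraph S).connectedComponentMk w → κ u = κ w) ∧ ∀ u ∈ W, κ u = d)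
            then (-1 : MvPolynomial (Fin N) ℚ) ^ S.card * wt κ else 0 := by
    intro S hS
    have hiso : ∀ e ∈ S, ∀ x ∈ e, x ∉ W := fun e he =>
      (Finset.mem_filter.mp (Finset.mem_powerset.mp hS he)).2
    have hWresp : ∀ u w : V, (GSgraph S).Reachable u w → u ∈ W → w ∈ W := by
      intro u w hr huW
      have := reach_eq_of_isolated (P := fun x => x ∉ W) hiso hr (not_not_intro huW)
      exact this ▸ huW
    rw [← Finset.sum_filter, ← Finset.mul_sum]
    congr 1
    convert prod_powersum (GSgraph S) W hN hWresp using 4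
  rw [Finset.sum_congr rfl step1, Finset.sum_comm]
  have hker : ∀ κ : V → Fin N,
      (∑ S ∈ E'.powerset,
        if ((∀ u w, (GSgraph S).connectedComponentMk u =
              (GSgraph S).connectedComponentMk w → κ u = κ w) ∧ ∀ u ∈ W, κ u = d)
        then (-1 : MvPolynomial (Fin N) ℚ) ^ S.card * wt κ else 0)
      = if ((∀ u ∈ W, κ u = d) ∧ M κ = ∅) then wt κ else 0 := by
    intro κ
    by_cases hB : ∀ u ∈ W, κ u = d
    · have hcond : ∀ S ∈ E'.powerset,
          ((∀ u w, (GSgraph S).connectedComponentMk u =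
              (GSgraph S).connectedComponentMk w → κ u = κ w) ∧ ∀ u ∈ W, κ u = d)
          ↔ S ⊆ M κ := by
        intro S hS
        have hSE : S ⊆ E' := Finset.mem_powerset.mp hS
        constructor
        · intro h e he
          refine Finset.mem_filter.mpr ⟨hSE he, ?_⟩
          intro a b heq
          rw [heq] at he
          by_cases hab : a = b
          · rw [hab]
          · exact h.1 a b (SimpleGraph.ConnectedComponent.connectedComponentMk_eq_of_adj
              ((SimpleGraph.fromEdgeSet_adj _).mpr ⟨by exact_mod_cast he, hab⟩))
        · intro hsub
          refine ⟨fun u w hcomp => ?_, hB⟩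
          refine const_of_reach (fun a b hab => ?_)
            (SimpleGraph.ConnectedComponent.exact hcomp)
          exact (Finset.mem_filter.mp (hsub hab)).2 a b rfl
      calc (∑ S ∈ E'.powerset,
            if ((∀ u w, (GSgraph S).connectedComponentMk u =
                  (GSgraph S).connectedComponentMk w → κ u = κ w) ∧ ∀ u ∈ W, κ u = d)
            then (-1 : MvPolynomial (Fin N) ℚ) ^ S.card * wt κ else 0)
          = ∑ S ∈ E'.powerset,
            if S ⊆ M κ then (-1 : MvPolynomial (Fin N) ℚ) ^ S.card * wt κ else 0 := by
            refine Finset.sum_congr rfl fun S hS => ?_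
            rw [if_congr (hcond S hS) rfl rfl]
        _ = ∑ S ∈ (M κ).powerset, (-1 : MvPolynomial (Fin N) ℚ) ^ S.card * wt κ := by
            rw [← Finset.sum_filter]
            refine Finset.sum_congr ?_ fun _ _ => rfl
            ext S
            simp only [Finset.mem_filter, Finset.mem_powerset]
            constructor
            · exact fun h => h.2
            · intro h
              exact ⟨h.trans (Finset.filter_subset _ _), h⟩
        _ = (∑ S ∈ (M κ).powerset, (-1 : MvPolynomial (Fin N) ℚ) ^ S.card) * wt κ := by
            rw [Finset.sum_mul]
        _ = (if (M κ) = ∅ then 1 else 0) * wt κ := by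
            congr 1
            have hz := Finset.sum_powerset_neg_one_pow_card (x := M κ)
            have : (∑ S ∈ (M κ).powerset, (-1 : MvPolynomial (Fin N) ℚ) ^ S.card)
                = ((∑ S ∈ (M κ).powerset, (-1 : ℤ) ^ S.card : ℤ) :
                    MvPolynomial (Fin N) ℚ) := by
              push_cast
              rfl
            rw [this, hz]
            split <;> simp
        _ = if ((∀ u ∈ W, κ u = d) ∧ M κ = ∅) then wt κ else 0 := by
            by_cases hM0 : M κ = ∅
            · rw [if_pos hM0, if_pos ⟨hB, hM0⟩, one_mul]
            · rw [if_neg hM0, if_neg (fun h => hM0 h.2), zero_mul]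
    · rw [if_neg (fun h => hB h.1)]
      refine Finset.sum_eq_zero fun S _ => ?_
      rw [if_neg (fun h => hB h.2)]
  rw [Finset.sum_congr rfl (fun κ _ => hker κ), ← Finset.sum_filter]
  -- final bijection with proper colorings of the induced graph
  unfold XG properColorings
  refine Finset.sum_nbij' (i := fun κ => fun u : ↥{x : V | x ∉ W} => κ ↑u)
    (j := fun κ' => fun u : V => if h : u ∉ W then κ' ⟨u, h⟩ else d) ?_ ?_ ?_ ?_ ?_
  · intro κ hκ
    obtain ⟨-, hB, hM0⟩ := Finset.mem_filter.mp hκ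
    refine Finset.mem_filter.mpr ⟨?_, ?_⟩
    · exact mem_univ'' _
    intro u w hadj heq
    have hGadj : G.Adj ↑u ↑w := by
      simpa using hadj
    have hmem : s((↑u : V), (↑w : V)) ∈ M κ := by
      refine Finset.mem_filter.mpr ⟨Finset.mem_filter.mpr ⟨?_, ?_⟩, ?_⟩
      · exact SimpleGraph.mem_edgeFinset.mpr hGadj
      · intro x hx
        rcases Sym2.mem_iff.mp hx with rfl | rfl
        · exact u.2
        · exact w.2
      · intro a b heq2
        rcases Sym2.eq_iff.mp heq2 with ⟨h1, h2⟩ | ⟨h1, h2⟩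
        · rw [← h1, ← h2]; exact heq
        · rw [← h1, ← h2]; exact heq.symm
    exact Finset.eq_empty_iff_forall_notMem.mp hM0 _ hmem
  · intro κ' hκ'
    have hproper := (Finset.mem_filter.mp hκ').2
    refine Finset.mem_filter.mpr ⟨Finset.mem_univ _, fun u huW => dif_neg (not_not_intro huW), ?_⟩
    rw [Finset.eq_empty_iff_forall_notMem]
    intro e
    induction e with
    | _ a b =>
      intro he
      obtain ⟨heE', hmono⟩ := Finset.mem_filter.mp he
      obtain ⟨heG, havoid⟩ := Finset.mem_filter.mp heE'
      have ha : a ∉ W := havoid a (by simp)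
      have hb : b ∉ W := havoid b (by simp)
      have hGadj : G.Adj a b := SimpleGraph.mem_edgeFinset.mp heG
      have hadj' : (G.induce {x : V | x ∉ W}).Adj ⟨a, ha⟩ ⟨b, hb⟩ := by
        simpa using hGadj
      refine hproper _ _ hadj' ?_
      have h2 := hmono a b rfl
      simp only at h2
      rw [dif_pos ha, dif_pos hb] at h2
      exact h2
  · intro κ hκ
    obtain ⟨-, hB, -⟩ := Finset.mem_filter.mp hκ
    funext u
    beta_reduce
    by_cases h : u ∉ W
    · rw [dif_pos h]
    · rw [dif_neg h]
      exact (hB u (not_not.mp h)).symm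
  · intro κ' _
    funext u
    beta_reduce
    rw [dif_pos (show (↑u : V) ∉ W from u.2)]
  · intro κ _
    exact Finset.prod_subtype (Finset.univ.filter (fun u : V => u ∉ W))
      (by intro x; simp) (fun x => (X (κ x) : MvPolynomial (Fin N) ℚ))

set_option maxHeartbeats 1000000 in
private lemma pLam_eq (G : SimpleGraph V) (v : V) (S : Finset (Sym2 V)) (N : ℕ)
    (W : Finset V)
    (hW : W = Finset.univ.filter fun u =>
      (GSgraph S).connectedComponentMk u = (GSgraph S).connectedComponentMk v) :
    pLamMinus G v S N =
      ∏ c ∈ (Finset.univ.filter fun c :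
          (GSgraph (S.filter fun e => ∀ x ∈ e, x ∉ W)).ConnectedComponent =>
          ∀ u, (GSgraph (S.filter fun e => ∀ x ∈ e, x ∉ W)).connectedComponentMk u = c →
            u ∉ W),
        ∑ i : Fin N, (X i : MvPolynomial (Fin N) ℚ) ^
          compCard (GSgraph (S.filter fun e => ∀ x ∈ e, x ∉ W)) c := by
  classical
  have hsides := sides_of_comp S v W hW
  have hmemW : ∀ u : V, u ∈ W ↔ (GSgraph S).connectedComponentMk u =
      (GSgraph S).connectedComponentMk v := by
    intro u; rw [hW]; simp
  have htrans : ∀ u w : V, u ∉ W →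
      ((GSgraph S).Reachable u w ↔
        (GSgraph (S.filter fun e => ∀ x ∈ e, x ∉ W)).Reachable u w) := by
    intro u w hu
    constructor
    · intro h
      have hsides' : ∀ e ∈ S, (∀ x ∈ e, x ∉ W) ∨ (∀ x ∈ e, ¬ x ∉ W) := by
        intro e he
        rcases hsides e he with h1 | h1
        · exact Or.inr (fun x hx => not_not_intro (h1 x hx))
        · exact Or.inl h1
      have h2 := (reach_side hsides' h hu).2
      rwa [Finset.filter_congr_decidable] at h2
    · exact fun h => reach_mono (Finset.filter_subset _ _) h
  have houtS : ∀ c : (GSgraph S).ConnectedComponent,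
      (GSgraph S).connectedComponentMk (Quot.out c) = c := fun c => Quot.out_eq c
  have houtS₂ : ∀ c : (GSgraph (S.filter fun e => ∀ x ∈ e, x ∉ W)).ConnectedComponent,
      (GSgraph (S.filter fun e => ∀ x ∈ e, x ∉ W)).connectedComponentMk (Quot.out c) = c :=
    fun c => Quot.out_eq c
  have houtW : ∀ c : (GSgraph S).ConnectedComponent,
      c ≠ (GSgraph S).connectedComponentMk v → Quot.out c ∉ W := by
    intro c hc hmem
    exact hc ((houtS c).symm.trans ((hmemW _).mp hmem))
  unfold pLamMinus
  refine Finset.prod_nbij'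
    (i := fun c => (GSgraph (S.filter fun e => ∀ x ∈ e, x ∉ W)).connectedComponentMk
      (Quot.out c))
    (j := fun c => (GSgraph S).connectedComponentMk (Quot.out c)) ?_ ?_ ?_ ?_ ?_
  · -- hi
    intro c hc
    have hcv : c ≠ (GSgraph S).connectedComponentMk v := (Finset.mem_erase.mp hc).1
    have hoc : Quot.out c ∉ W := houtW c hcv
    refine Finset.mem_filter.mpr ⟨Finset.mem_univ _, fun u hu huW => ?_⟩
    have hreach2 : (GSgraph (S.filter fun e => ∀ x ∈ e, x ∉ W)).Reachable u (Quot.out c) :=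
      SimpleGraph.ConnectedComponent.exact hu
    have hreach : (GSgraph S).Reachable u (Quot.out c) :=
      reach_mono (Finset.filter_subset _ _) hreach2
    have : (GSgraph S).connectedComponentMk u = c :=
      (SimpleGraph.ConnectedComponent.sound hreach).trans (houtS c)
    exact hcv (this.symm.trans ((hmemW u).mp huW))
  · -- hj
    intro c' hc'
    have hoc' : Quot.out c' ∉ W := (Finset.mem_filter.mp hc').2 _ (houtS₂ c')
    refine Finset.mem_erase.mpr ⟨?_, Finset.mem_univ _⟩
    exact fun h => hoc' ((hmemW _).mpr h)
  · -- left inverse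
    intro c hc
    have hcv : c ≠ (GSgraph S).connectedComponentMk v := (Finset.mem_erase.mp hc).1
    have hoc : Quot.out c ∉ W := houtW c hcv
    set c2 := (GSgraph (S.filter fun e => ∀ x ∈ e, x ∉ W)).connectedComponentMk (Quot.out c)
      with hc2
    have h1 : (GSgraph (S.filter fun e => ∀ x ∈ e, x ∉ W)).Reachable (Quot.out c2)
        (Quot.out c) := SimpleGraph.ConnectedComponent.exact ((houtS₂ c2).trans hc2)
    have h2 : (GSgraph S).Reachable (Quot.out c2) (Quot.out c) :=
      reach_mono (Finset.filter_subset _ _) h1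
    exact (SimpleGraph.ConnectedComponent.sound h2).trans (houtS c)
  · -- right inverse
    intro c' hc'
    have hoc' : Quot.out c' ∉ W := (Finset.mem_filter.mp hc').2 _ (houtS₂ c')
    set c1 := (GSgraph S).connectedComponentMk (Quot.out c') with hc1
    have h1 : (GSgraph S).Reachable (Quot.out c') (Quot.out c1) :=
      SimpleGraph.ConnectedComponent.exact (hc1.symm.trans ((houtS c1).symm))
    have h2 : (GSgraph (S.filter fun e => ∀ x ∈ e, x ∉ W)).Reachable (Quot.out c')
        (Quot.out c1) := (htrans _ _ hoc').mp h1
    exact ((SimpleGraph.ConnectedComponent.sound h2).symm).trans (houtS₂ c')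
  · -- factors agree
    intro c hc
    have hcv : c ≠ (GSgraph S).connectedComponentMk v := (Finset.mem_erase.mp hc).1
    have hoc : Quot.out c ∉ W := houtW c hcv
    have hcard : compCard (GSgraph S) c =
        compCard (GSgraph (S.filter fun e => ∀ x ∈ e, x ∉ W))
          ((GSgraph (S.filter fun e => ∀ x ∈ e, x ∉ W)).connectedComponentMk (Quot.out c)) := by
      unfold compCard
      congr 1
      ext u
      simp only [Finset.mem_filter, Finset.mem_univ, true_and]
      constructor
      · intro hu
        have hreach : (GSgraph S).Reachable (Quot.out c) u :=
          SimpleGraph.ConnectedComponent.exact ((houtS c).trans hu.symm)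
        have := (htrans _ u hoc).mp hreach
        exact (SimpleGraph.ConnectedComponent.sound this.symm)
      · intro hu
        have hreach : (GSgraph (S.filter fun e => ∀ x ∈ e, x ∉ W)).Reachable (Quot.out c) u :=
          SimpleGraph.ConnectedComponent.exact hu.symm
        have h2 : (GSgraph S).Reachable (Quot.out c) u :=
          reach_mono (Finset.filter_subset _ _) hreach
        exact (SimpleGraph.ConnectedComponent.sound h2.symm).trans (houtS c)
    rw [hcard]

private lemma fromEdgeSet_le {α : Type} [Fintype α] (H : SimpleGraph α) (T : Finset (Sym2 α))
    (hT : T ⊆ H.edgeFinset) : SimpleGraph.fromEdgeSet (↑T : Set (Sym2 α)) ≤ H := by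
  intro a b hadj
  rw [SimpleGraph.fromEdgeSet_adj] at hadj
  exact H.mem_edgeSet.mp (SimpleGraph.mem_edgeFinset.mp (hT (by exact_mod_cast hadj.1)))

private lemma disj_inout {W : Finset V} {T₁ T₂ : Finset (Sym2 V)}
    (h1 : ∀ e ∈ T₁, ∀ x ∈ e, x ∈ W) (h2 : ∀ e ∈ T₂, ∀ x ∈ e, x ∉ W) :
    Disjoint T₁ T₂ := by
  rw [Finset.disjoint_left]
  intro e he1 he2
  revert he1 he2
  induction e with
  | _ a b =>
    intro he1 he2
    exact h2 _ he2 a (by simp) (h1 _ he1 a (by simp))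

private lemma split_eq {W : Finset V} {S : Finset (Sym2 V)}
    (hsides : ∀ e ∈ S, (∀ x ∈ e, x ∈ W) ∨ (∀ x ∈ e, x ∉ W)) :
    (S.filter fun e => ∀ x ∈ e, x ∈ W) ∪ (S.filter fun e => ∀ x ∈ e, x ∉ W) = S := by
  ext e
  simp only [Finset.mem_union, Finset.mem_filter]
  constructor
  · rintro (⟨h, -⟩ | ⟨h, -⟩) <;> exact h
  · intro he
    rcases hsides e he with h | h
    · exact Or.inl ⟨he, h⟩
    · exact Or.inr ⟨he, h⟩

private lemma filter_in_union {W : Finset V} {T₁ T₂ : Finset (Sym2 V)}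
    (h1 : ∀ e ∈ T₁, ∀ x ∈ e, x ∈ W) (h2 : ∀ e ∈ T₂, ∀ x ∈ e, x ∉ W) :
    ((T₁ ∪ T₂).filter fun e => ∀ x ∈ e, x ∈ W) = T₁ := by
  ext e
  simp only [Finset.mem_filter, Finset.mem_union]
  constructor
  · rintro ⟨h | h, hin⟩
    · exact h
    · exfalso
      revert hin
      induction e with
      | _ a b =>
        intro hin
        exact h2 _ h a (by simp) (hin a (by simp))
  · intro he
    exact ⟨Or.inl he, h1 e he⟩

private lemma filter_out_union {W : Finset V} {T₁ T₂ : Finset (Sym2 V)}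
    (h1 : ∀ e ∈ T₁, ∀ x ∈ e, x ∈ W) (h2 : ∀ e ∈ T₂, ∀ x ∈ e, x ∉ W) :
    ((T₁ ∪ T₂).filter fun e => ∀ x ∈ e, x ∉ W) = T₂ := by
  ext e
  simp only [Finset.mem_filter, Finset.mem_union]
  constructor
  · rintro ⟨h | h, hout⟩
    · exfalso
      revert hout
      induction e with
      | _ a b =>
        intro hout
        exact hout a (by simp) (h1 _ h a (by simp))
    · exact h
  · intro he
    exact ⟨Or.inr he, h2 e he⟩

private lemma image_in_W {W : Finset V} (T : Finset (Sym2 ↥(↑W : Set V))) :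
    ∀ e ∈ T.image (Sym2.map (Subtype.val : ↥(↑W : Set V) → V)), ∀ x ∈ e, x ∈ W := by
  intro e he
  obtain ⟨e', -, rfl⟩ := Finset.mem_image.mp he
  revert he
  induction e' with
  | _ a b =>
    intro _ x hx
    rw [Sym2.map_pair_eq] at hx
    rcases Sym2.mem_iff.mp hx with rfl | rfl
    · exact a.2
    · exact b.2

private lemma conn_of_comp (G : SimpleGraph V) (v : V) (S : Finset (Sym2 V)) (W : Finset V)
    (hWS : W = Finset.univ.filter fun u =>
      (GSgraph S).connectedComponentMk u = (GSgraph S).connectedComponentMk v)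
    (hv : v ∈ W) :
    (SimpleGraph.fromEdgeSet
      (↑((S.filter fun e => ∀ x ∈ e, x ∈ W).preimage
          (Sym2.map (Subtype.val : ↥(↑W : Set V) → V))
          (Set.injOn_of_injective (Sym2.map.injective Subtype.val_injective))) :
        Set (Sym2 ↥(↑W : Set V)))).Connected := by
  classical
  have hS₁W : ∀ e ∈ (S.filter fun e => ∀ x ∈ e, x ∈ W), ∀ x ∈ e, x ∈ (↑W : Set V) :=
    fun e he => (Finset.mem_filter.mp he).2
  have himg := image_preimage_eq_self (A := (↑W : Set V))
    (S.filter fun e => ∀ x ∈ e, x ∈ W) hS₁W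
  rw [SimpleGraph.connected_iff]
  refine ⟨?_, ⟨⟨v, hv⟩⟩⟩
  have hWsub : ∀ x : V, x ∈ W →
      (GSgraph S).connectedComponentMk x = (GSgraph S).connectedComponentMk v := by
    intro x hx
    rw [hWS] at hx
    exact (Finset.mem_filter.mp hx).2
  intro a b
  have haW : (↑a : V) ∈ W := a.2
  have hbW : (↑b : V) ∈ W := b.2
  have h1 := hWsub ↑a haW
  have h2 := hWsub ↑b hbW
  have hreach : (GSgraph S).Reachable ↑a ↑b :=
    SimpleGraph.ConnectedComponent.exact (h1.trans h2.symm)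
  have hsides := sides_of_comp S v W hWS
  have h3 := (reach_side (P := fun x => x ∈ W) hsides hreach haW).2
  rw [Finset.filter_congr_decidable] at h3
  rw [← himg] at h3
  obtain ⟨p⟩ := h3
  exact reach_of_reach_image _ p haW hbW

private lemma wmap_union (G : SimpleGraph V) (v : V) (W : Finset V) (hv : v ∈ W)
    (S₁' : Finset (Sym2 ↥(↑W : Set V))) (S₂ : Finset (Sym2 V))
    (hconn : (SimpleGraph.fromEdgeSet (↑S₁' : Set (Sym2 ↥(↑W : Set V)))).Connected)
    (hS₂ : ∀ e ∈ S₂, ∀ x ∈ e, x ∉ W) :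
    Finset.univ.filter (fun u =>
      (GSgraph (S₁'.image (Sym2.map Subtype.val) ∪ S₂)).connectedComponentMk u =
      (GSgraph (S₁'.image (Sym2.map Subtype.val) ∪ S₂)).connectedComponentMk v) = W := by
  classical
  have hT₁W := image_in_W S₁'
  have hsides : ∀ e ∈ S₁'.image (Sym2.map Subtype.val) ∪ S₂,
      (∀ x ∈ e, x ∈ W) ∨ (∀ x ∈ e, x ∉ W) := by
    intro e he
    rcases Finset.mem_union.mp he with h | h
    · exact Or.inl (hT₁W e h)
    · exact Or.inr (hS₂ e h)
  ext u
  simp only [Finset.mem_filter, Finset.mem_univ, true_and]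
  constructor
  · intro hu
    have hreach : (GSgraph (S₁'.image (Sym2.map Subtype.val) ∪ S₂)).Reachable v u :=
      (SimpleGraph.ConnectedComponent.exact hu).symm
    exact (reach_side hsides hreach hv).1
  · intro hu
    have h1 : (SimpleGraph.fromEdgeSet
        (↑S₁' : Set (Sym2 ↥(↑W : Set V)))).Reachable ⟨u, hu⟩ ⟨v, hv⟩ :=
      hconn.preconnected _ _
    have h2 := reach_image_of_reach h1
    have h3 : (GSgraph (S₁'.image (Sym2.map Subtype.val) ∪ S₂)).Reachable u v :=
      reach_mono Finset.subset_union_left h2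
    exact SimpleGraph.ConnectedComponent.sound h3

private lemma preimage_image_eq' {α β : Type} {f : α → β} (hinj : Function.Injective f)
    (s : Finset α) :
    (s.image f).preimage f (Set.injOn_of_injective hinj) = s := by
  ext a
  simp only [Finset.mem_preimage, Finset.mem_image]
  constructor
  · rintro ⟨a', h, heq⟩
    rwa [← hinj heq]
  · intro ha
    exact ⟨a, ha, rfl⟩

set_option maxHeartbeats 2000000 in
private lemma perW (G : SimpleGraph V) (v : V) {N : ℕ} (hN : 1 ≤ N) (k : ℕ)
    (W : Finset V) (hv : v ∈ W) (hcard : W.card = k + 1) :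
    ∑ S ∈ G.edgeFinset.powerset.filter
        (fun S => Finset.univ.filter (fun u =>
          (GSgraph S).connectedComponentMk u = (GSgraph S).connectedComponentMk v) = W),
      (-1 : MvPolynomial (Fin N) ℚ) ^ k * ((-1) ^ S.card * pLamMinus G v S N)
    = (fH G W k) • XG (G.induce {x : V | x ∉ W}) N := by
  classical
  have hinj : Function.Injective (Sym2.map (Subtype.val : ↥(↑W : Set V) → V)) :=
    Sym2.map.injective Subtype.val_injective
  rw [← stanley G W hN]
  unfold fH
  rw [Finset.sum_smul]
  rw [Finset.sum_congr rfl (fun S₁' _ => Finset.smul_sum), ← Finset.sum_product']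
  refine Finset.sum_nbij'
    (i := fun S => ((S.filter fun e => ∀ x ∈ e, x ∈ W).preimage
        (Sym2.map (Subtype.val : ↥(↑W : Set V) → V))
        (Set.injOn_of_injective hinj),
      S.filter fun e => ∀ x ∈ e, x ∉ W))
    (j := fun p => p.1.image (Sym2.map (Subtype.val : ↥(↑W : Set V) → V)) ∪ p.2)
    ?_ ?_ ?_ ?_ ?_
  · -- hi : image of i lands in the product set
    intro S hS
    beta_reduce
    obtain ⟨hSpow, hWS⟩ := Finset.mem_filter.mp hS
    have hSE : S ⊆ G.edgeFinset := Finset.mem_powerset.mp hSpow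
    refine Finset.mem_product.mpr ⟨Finset.mem_filter.mpr ⟨Finset.mem_powerset.mpr ?_, ?_⟩, ?_⟩
    · -- S₁' is a set of edges of the induced graph
      intro e' he'
      simp only [Finset.mem_preimage] at he'
      revert he'
      induction e' with
      | _ a' b' =>
        intro hmem
        rw [Sym2.map_pair_eq] at hmem
        have hG : G.Adj ↑a' ↑b' :=
          SimpleGraph.mem_edgeFinset.mp (hSE (Finset.mem_filter.mp hmem).1)
        have hadj' : (G.induce (↑W : Set V)).Adj a' b' := by
          simp only [SimpleGraph.comap_adj, Function.Embedding.coe_subtype]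
          exact hG
        exact SimpleGraph.mem_edgeFinset.mpr ((G.induce (↑W : Set V)).mem_edgeSet.mpr hadj')
    · exact conn_of_comp G v S W hWS.symm hv
    · -- S₂ lands in the powerset of edges avoiding W
      refine Finset.mem_powerset.mpr fun e he => ?_
      obtain ⟨heS, hout⟩ := Finset.mem_filter.mp he
      exact Finset.mem_filter.mpr ⟨hSE heS, hout⟩
  · -- hj
    intro p hp
    beta_reduce
    obtain ⟨hp1, hp2⟩ := Finset.mem_product.mp hp
    obtain ⟨hp1pow, hp1conn⟩ := Finset.mem_filter.mp hp1
    have hp1sub := Finset.mem_powerset.mp hp1pow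
    have hS₂sub := Finset.mem_powerset.mp hp2
    have hS₂out : ∀ e ∈ p.2, ∀ x ∈ e, x ∉ W :=
      fun e he => (Finset.mem_filter.mp (hS₂sub he)).2
    refine Finset.mem_filter.mpr ⟨Finset.mem_powerset.mpr ?_, ?_⟩
    · refine Finset.union_subset ?_ (fun e he => (Finset.mem_filter.mp (hS₂sub he)).1)
      intro e he
      obtain ⟨e', he', rfl⟩ := Finset.mem_image.mp he
      have hadj' : e' ∈ (G.induce (↑W : Set V)).edgeSet :=
        SimpleGraph.mem_edgeFinset.mp (hp1sub he')
      revert hadj'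
      induction e' with
      | _ a' b' =>
        intro hadj'
        have hG : G.Adj ↑a' ↑b' := by
          have := (G.induce (↑W : Set V)).mem_edgeSet.mp hadj'
          simpa using this
        rw [Sym2.map_pair_eq]
        exact SimpleGraph.mem_edgeFinset.mpr (G.mem_edgeSet.mpr hG)
    · exact wmap_union G v W hv p.1 p.2 hp1conn hS₂out
  · -- left inverse
    intro S hS
    obtain ⟨hSpow, hWS⟩ := Finset.mem_filter.mp hS
    have himg : ((S.filter fun e => ∀ x ∈ e, x ∈ W).preimage
        (Sym2.map (Subtype.val : ↥(↑W : Set V) → V))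
        (Set.injOn_of_injective hinj)).image (Sym2.map Subtype.val)
        = S.filter fun e => ∀ x ∈ e, x ∈ W :=
      image_preimage_eq_self _ (fun e he => (Finset.mem_filter.mp he).2)
    beta_reduce
    rw [himg]
    exact split_eq (sides_of_comp S v W hWS.symm)
  · -- right inverse
    intro p hp
    obtain ⟨hp1, hp2⟩ := Finset.mem_product.mp hp
    have hp1sub := Finset.mem_powerset.mp (Finset.mem_filter.mp hp1).1
    have hS₂out : ∀ e ∈ p.2, ∀ x ∈ e, x ∉ W :=
      fun e he => (Finset.mem_filter.mp (Finset.mem_powerset.mp hp2 he)).2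
    have h1 : ((p.1.image (Sym2.map (Subtype.val : ↥(↑W : Set V) → V)) ∪ p.2).filter
        fun e => ∀ x ∈ e, x ∈ W) = p.1.image (Sym2.map Subtype.val) :=
      filter_in_union (image_in_W p.1) hS₂out
    have h2 : ((p.1.image (Sym2.map (Subtype.val : ↥(↑W : Set V) → V)) ∪ p.2).filter
        fun e => ∀ x ∈ e, x ∉ W) = p.2 :=
      filter_out_union (image_in_W p.1) hS₂out
    beta_reduce
    refine Prod.ext ?_ ?_
    · ext e'
      rw [Finset.mem_preimage, h1]
      constructor
      · intro h
        obtain ⟨e'', he'', heq⟩ := Finset.mem_image.mp h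
        rwa [← hinj heq]
      · intro h
        exact Finset.mem_image_of_mem _ h
    · exact h2
  · -- terms agree
    intro S hS
    obtain ⟨hSpow, hWS⟩ := Finset.mem_filter.mp hS
    have hsides := sides_of_comp S v W hWS.symm
    have hdisj : Disjoint (S.filter fun e => ∀ x ∈ e, x ∈ W)
        (S.filter fun e => ∀ x ∈ e, x ∉ W) :=
      disj_inout (fun e he => (Finset.mem_filter.mp he).2)
        (fun e he => (Finset.mem_filter.mp he).2)
    have hcls : (S.filter fun e => ∀ x ∈ e, x ∈ W).card
        + (S.filter fun e => ∀ x ∈ e, x ∉ W).card = S.card := by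
      rw [← Finset.card_union_of_disjoint hdisj, split_eq hsides]
    have himg : ((S.filter fun e => ∀ x ∈ e, x ∈ W).preimage
        (Sym2.map (Subtype.val : ↥(↑W : Set V) → V))
        (Set.injOn_of_injective hinj)).image (Sym2.map Subtype.val)
        = S.filter fun e => ∀ x ∈ e, x ∈ W :=
      image_preimage_eq_self _ (fun e he => (Finset.mem_filter.mp he).2)
    have hcard1 : ((S.filter fun e => ∀ x ∈ e, x ∈ W).preimage
        (Sym2.map (Subtype.val : ↥(↑W : Set V) → V))
        (Set.injOn_of_injective hinj)).card
        = (S.filter fun e => ∀ x ∈ e, x ∈ W).card := by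
      conv_rhs => rw [← himg]
      rw [Finset.card_image_of_injective _ hinj]
    beta_reduce
    rw [zsmul_eq_mul, pLam_eq G v S N W hWS.symm, hcard1]
    push_cast
    rw [← hcls]
    ring

private lemma coeff_pointedP (G : SimpleGraph V) (v : V) (N : ℕ) (k : ℕ) :
    (pointedP G v N).coeff k =
      ∑ S ∈ G.edgeFinset.powerset,
        (if compCard (GSgraph S) ((GSgraph S).connectedComponentMk v) = k + 1
          then (-1 : MvPolynomial (Fin N) ℚ) ^ S.card * pLamMinus G v S N else 0) := by
  unfold pointedP
  rw [Polynomial.finset_sum_coeff]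
  refine Finset.sum_congr rfl fun S _ => ?_
  have hm1 : 1 ≤ compCard (GSgraph S) ((GSgraph S).connectedComponentMk v) := by
    unfold compCard
    exact Finset.card_pos.mpr ⟨v, Finset.mem_filter.mpr ⟨Finset.mem_univ _, rfl⟩⟩
  have hC : ((-1 : Polynomial (MvPolynomial (Fin N) ℚ)) ^ S.card) =
      Polynomial.C ((-1 : MvPolynomial (Fin N) ℚ) ^ S.card) := by
    rw [map_pow, map_neg, map_one]
  rw [hC, ← mul_assoc, ← map_mul, Polynomial.coeff_C_mul, Polynomial.coeff_X_pow]
  have hiff : (k = compCard (GSgraph S) ((GSgraph S).connectedComponentMk v) - 1) ↔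
      (compCard (GSgraph S) ((GSgraph S).connectedComponentMk v) = k + 1) := by omega
  rw [mul_ite, mul_one, mul_zero, if_congr hiff rfl rfl]

end AuxWalk


/-- Combinatorial interpretation of the monomial expansion of the pointed chromatic
polynomial: for each `k ≥ 0`, the coefficient of `(−z)^k` in `P_{G,v}` equals
`Σ_H f(H)·X_{G∖H}(x_1,…,x_N)`, summed over all connected induced subgraphs `H` of `G`
with `k+1` vertices containing `v`. -/
theorem stmt19 {V : Type} [Fintype V] (G : SimpleGraph V) (v : V) (N : ℕ) (hN : 1 ≤ N)
    (k : ℕ) :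
    (-1 : MvPolynomial (Fin N) ℚ) ^ k * (pointedP G v N).coeff k =
      ∑ W ∈ (Finset.univ.powersetCard (k + 1)).filter
          (fun W : Finset V => v ∈ W ∧ (G.induce (↑W : Set V)).Connected),
        (fH G W k) • XG (G.induce {x : V | x ∉ W}) N := by
  classical
  rw [coeff_pointedP, Finset.mul_sum]
  have hstep : ∀ S ∈ G.edgeFinset.powerset,
      ((-1 : MvPolynomial (Fin N) ℚ) ^ k *
        if compCard (GSgraph S) ((GSgraph S).connectedComponentMk v) = k + 1
          then (-1 : MvPolynomial (Fin N) ℚ) ^ S.card * pLamMinus G v S N else 0)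
      = (if compCard (GSgraph S) ((GSgraph S).connectedComponentMk v) = k + 1
          then (-1 : MvPolynomial (Fin N) ℚ) ^ k
            * ((-1) ^ S.card * pLamMinus G v S N) else 0) :=
    fun S _ => by rw [mul_ite, mul_zero]
  rw [Finset.sum_congr rfl hstep, ← Finset.sum_filter]
  have hmaps : ∀ S ∈ G.edgeFinset.powerset.filter
      (fun S => compCard (GSgraph S) ((GSgraph S).connectedComponentMk v) = k + 1),
      (Finset.univ.filter fun u => (GSgraph S).connectedComponentMk u =
        (GSgraph S).connectedComponentMk v)
      ∈ (Finset.univ.powersetCard (k + 1)).filter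
          (fun W : Finset V => v ∈ W ∧ (G.induce (↑W : Set V)).Connected) := by
    intro S hS
    obtain ⟨hpow, hcc⟩ := Finset.mem_filter.mp hS
    have hSE : S ⊆ G.edgeFinset := Finset.mem_powerset.mp hpow
    set W := Finset.univ.filter (fun u => (GSgraph S).connectedComponentMk u =
      (GSgraph S).connectedComponentMk v) with hWdef
    have hv : v ∈ W := Finset.mem_filter.mpr ⟨Finset.mem_univ _, rfl⟩
    have hcompW : compCard (GSgraph S) ((GSgraph S).connectedComponentMk v) = W.card := by
      unfold compCard
      rfl
    have hWcard : W.card = k + 1 := by rw [← hcompW]; exact hcc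
    refine Finset.mem_filter.mpr
      ⟨Finset.mem_powersetCard.mpr ⟨Finset.subset_univ _, hWcard⟩, hv, ?_⟩
    have hconn := conn_of_comp G v S W hWdef hv
    have hsub : ((S.filter fun e => ∀ x ∈ e, x ∈ W).preimage
        (Sym2.map (Subtype.val : ↥(↑W : Set V) → V))
        (Set.injOn_of_injective (Sym2.map.injective Subtype.val_injective)))
        ⊆ (G.induce (↑W : Set V)).edgeFinset := by
      intro e' he'
      simp only [Finset.mem_preimage] at he'
      revert he'
      induction e' with
      | _ a' b' =>
        intro hmem
        rw [Sym2.map_pair_eq] at hmem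
        have hG : G.Adj ↑a' ↑b' :=
          SimpleGraph.mem_edgeFinset.mp (hSE (Finset.mem_filter.mp hmem).1)
        have hadj' : (G.induce (↑W : Set V)).Adj a' b' := by
          simp only [SimpleGraph.comap_adj, Function.Embedding.coe_subtype]
          exact hG
        exact SimpleGraph.mem_edgeFinset.mpr ((G.induce (↑W : Set V)).mem_edgeSet.mpr hadj')
    exact hconn.mono (fromEdgeSet_le _ _ hsub)
  rw [← Finset.sum_fiberwise_of_maps_to hmaps
    (fun S => (-1 : MvPolynomial (Fin N) ℚ) ^ k * ((-1) ^ S.card * pLamMinus G v S N))]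
  refine Finset.sum_congr rfl fun W hW => ?_
  obtain ⟨hWp, hv, hconn⟩ := Finset.mem_filter.mp hW
  have hWcard : W.card = k + 1 := (Finset.mem_powersetCard.mp hWp).2
  have hfib : (G.edgeFinset.powerset.filter
      (fun S => compCard (GSgraph S) ((GSgraph S).connectedComponentMk v) = k + 1)).filter
      (fun S => Finset.univ.filter (fun u => (GSgraph S).connectedComponentMk u =
        (GSgraph S).connectedComponentMk v) = W)
      = G.edgeFinset.powerset.filter
        (fun S => Finset.univ.filter (fun u => (GSgraph S).connectedComponentMk u =
          (GSgraph S).connectedComponentMk v) = W) := by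
    ext S
    simp only [Finset.mem_filter]
    constructor
    · rintro ⟨⟨h1, h2⟩, h3⟩
      exact ⟨h1, h3⟩
    · rintro ⟨h1, h3⟩
      refine ⟨⟨h1, ?_⟩, h3⟩
      have hcompW : compCard (GSgraph S) ((GSgraph S).connectedComponentMk v)
          = (Finset.univ.filter (fun u => (GSgraph S).connectedComponentMk u =
            (GSgraph S).connectedComponentMk v)).card := by
        unfold compCard
        rfl
      rw [hcompW, h3, hWcard]
  rw [hfib]
  exact perW G v hN k W hv hWcard
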